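/- Let k be a non-negative integer and let p_k(θ) = Σ_{x=0}^k c_x θ^x be a real polynomial of degree at most k. Then its coefficients satisfy |c_x| ≤ (k^x / x!) · max over |θ| ≤ 1 of |p_k(θ)|, for each 0 ≤ x ≤ k. -/

import Mathlib

noncomputable section

open Polynomial Finset

lemma auxPow1 (N z : ℕ) : (N+1)^z ≤ N^z + z*(N+1)^(z-1) := by
  induction z with
  | zero => simp
  | succ z ih =>
    rcases Nat.eq_zero_or_pos z with hz | hz
    · subst hz; simp
    · have hz1 : z - 1 + 1 = z := by omega
      have hB : (N+1) * (N+1)^(z-1) = (N+1)^z := by rw [← pow_succ']; rw [hz1]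
      have h2 : N^z ≤ (N+1)^z := Nat.pow_le_pow_left (by omega) z
      have step : (N+1) * (N^z + z*(N+1)^(z-1)) = N^(z+1) + N^z + z*(N+1)^z := by
        calc (N+1) * (N^z + z*(N+1)^(z-1)) = (N+1)*N^z + z*((N+1)*(N+1)^(z-1)) := by ring
          _ = N^(z+1) + N^z + z*(N+1)^z := by rw [hB]; ring
      calc (N+1)^(z+1) = (N+1) * (N+1)^z := by ring
        _ ≤ (N+1) * (N^z + z*(N+1)^(z-1)) := Nat.mul_le_mul_left _ ih
        _ = N^(z+1) + N^z + z*(N+1)^z := step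
        _ ≤ N^(z+1) + (z+1) * (N+1)^z := by
            have e : (z+1) * (N+1)^z = z*(N+1)^z + (N+1)^z := by ring
            omega

lemma auxPow2 (N z : ℕ) (hz : 1 ≤ z) : 2*z*(N+1)^(z-1) + N^z ≤ (N+2)^z := by
  induction z with
  | zero => omega
  | succ z ih =>
    rcases Nat.eq_zero_or_pos z with hz0 | hz0
    · subst hz0; simp; omega
    · have ih' := ih hz0
      have hz1 : z - 1 + 1 = z := by omega
      have hB : (N+1) * (N+1)^(z-1) = (N+1)^z := by rw [← pow_succ']; rw [hz1]
      have key : (N+1)^z ≤ z*(N+1)^(z-1) + N^z := by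
        have := auxPow1 N z; omega
      have expand : (N+2) * (2*z*(N+1)^(z-1) + N^z)
          = 2*z*(N+1)^z + 2*z*(N+1)^(z-1) + (N+2)*N^z := by
        calc (N+2) * (2*z*(N+1)^(z-1) + N^z)
            = 2*z*((N+1)*(N+1)^(z-1)) + 2*z*(N+1)^(z-1) + (N+2)*N^z := by ring
          _ = 2*z*(N+1)^z + 2*z*(N+1)^(z-1) + (N+2)*N^z := by rw [hB]
      have lhs_eq : 2*(z+1)*(N+1)^(z+1-1) + N^(z+1) = 2*z*(N+1)^z + 2*(N+1)^z + N*N^z := by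
        simp only [Nat.add_sub_cancel]; ring
      have mid : 2*z*(N+1)^z + 2*(N+1)^z + N*N^z ≤ (N+2) * (2*z*(N+1)^(z-1) + N^z) := by
        rw [expand]
        have e1 : 2*z*(N+1)^(z-1) = 2*(z*(N+1)^(z-1)) := by ring
        have e2 : (N+2)*N^z = N*N^z + 2*N^z := by ring
        omega
      calc 2*(z+1)*(N+1)^(z+1-1) + N^(z+1) = 2*z*(N+1)^z + 2*(N+1)^z + N*N^z := lhs_eq
        _ ≤ (N+2) * (2*z*(N+1)^(z-1) + N^z) := mid
        _ ≤ (N+2) * (N+2)^z := Nat.mul_le_mul_left _ ih'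
        _ = (N+2)^(z+1) := by ring


open Polynomial.Chebyshev in
lemma cheb_vanish (N : ℕ) : ∀ z : ℕ, (N < z ∨ z % 2 ≠ N % 2) → (T ℝ N).coeff z = 0 := by
  have key : ∀ N : ℕ, (∀ z : ℕ, (N < z ∨ z % 2 ≠ N % 2) → (T ℝ (N:ℤ)).coeff z = 0) ∧
      (∀ z : ℕ, (N+1 < z ∨ z % 2 ≠ (N+1) % 2) → (T ℝ ((N:ℤ)+1)).coeff z = 0) := by
    intro N
    induction N with
    | zero =>
      constructor
      · intro z hz
        have hz' : z ≠ 0 := by omega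
        simp only [Nat.cast_zero, T_zero, coeff_one]
        simp [hz']
      · intro z hz
        have hz' : ¬ (z = 1) := by omega
        simp only [Nat.cast_zero, zero_add, T_one, coeff_X]
        rw [if_neg (fun h => hz' h.symm)]
    | succ N ih =>
      obtain ⟨h0, h1⟩ := ih
      constructor
      · intro z hz
        rw [show ((N+1:ℕ):ℤ) = (N:ℤ)+1 by push_cast; ring]
        exact h1 z (by omega)
      intro z hz
      rw [show ((N+1:ℕ):ℤ)+1 = (N:ℤ) + 2 by push_cast; ring]
      rw [T_add_two]
      have h2X : (2 * X * T ℝ ((N:ℤ) + 1)) = C 2 * (X * T ℝ ((N:ℤ)+1)) := by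
        rw [show ((2:ℝ[X])) = C 2 from (map_ofNat Polynomial.C 2).symm]; ring
      rw [coeff_sub, h2X, coeff_C_mul]
      cases z with
      | zero =>
        rw [mul_coeff_zero, coeff_X_zero]
        have : (T ℝ (N:ℤ)).coeff 0 = 0 := h0 0 (by omega)
        simp [this]
      | succ w =>
        rw [coeff_X_mul]
        have e1 : (T ℝ ((N:ℤ)+1)).coeff w = 0 := h1 w (by omega)
        have e2 : (T ℝ (N:ℤ)).coeff (w+1) = 0 := h0 (w+1) (by omega)
        simp [e1, e2]
  intro z hz
  exact (key N).1 z hz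

open Polynomial.Chebyshev in
lemma cheb_bound (N : ℕ) : ∀ z : ℕ, |(T ℝ N).coeff z| ≤ (N:ℝ)^z / z.factorial := by
  have key : ∀ N : ℕ, (∀ z : ℕ, |(T ℝ (N:ℤ)).coeff z| ≤ (N:ℝ)^z / z.factorial) ∧
      (∀ z : ℕ, |(T ℝ ((N:ℤ)+1)).coeff z| ≤ ((N:ℝ)+1)^z / z.factorial) := by
    intro N
    induction N with
    | zero =>
      constructor
      · intro z
        cases z with
        | zero => simp [T_zero]
        | succ w =>
          simp only [Nat.cast_zero, T_zero, coeff_one]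
          rw [if_neg (by omega : ¬ (w+1 = 0))]
          rw [abs_zero]
          positivity
      · intro z
        simp only [Nat.cast_zero, zero_add, T_one, coeff_X]
        by_cases hz : z = 1
        · subst hz; simp
        · rw [if_neg (fun h => hz (h.symm))]
          rw [abs_zero]
          positivity
    | succ N ih =>
      obtain ⟨h0, h1⟩ := ih
      constructor
      · intro z
        rw [show ((N+1:ℕ):ℤ) = (N:ℤ)+1 by push_cast; ring]
        have := h1 z
        push_cast
        exact this
      intro z
      rw [show ((N+1:ℕ):ℤ)+1 = (N:ℤ) + 2 by push_cast; ring]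
      rw [T_add_two]
      have h2X : (2 * X * T ℝ ((N:ℤ) + 1)) = C 2 * (X * T ℝ ((N:ℤ)+1)) := by
        rw [show ((2:ℝ[X])) = C 2 from (map_ofNat Polynomial.C 2).symm]; ring
      rw [coeff_sub, h2X, coeff_C_mul]
      cases z with
      | zero =>
        rw [mul_coeff_zero, coeff_X_zero]
        simp only [zero_mul, mul_zero, zero_sub, abs_neg]
        have := h0 0
        push_cast
        calc |(T ℝ (N:ℤ)).coeff 0| ≤ (N:ℝ)^0 / Nat.factorial 0 := this
          _ ≤ ((N:ℝ)+1+1)^0 / Nat.factorial 0 := by norm_num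
      | succ w =>
        rw [coeff_X_mul]
        have b1 := h1 w
        have b0 := h0 (w+1)
        have habs : |2 * (T ℝ ((N:ℤ)+1)).coeff w - (T ℝ (N:ℤ)).coeff (w+1)|
            ≤ 2 * |(T ℝ ((N:ℤ)+1)).coeff w| + |(T ℝ (N:ℤ)).coeff (w+1)| := by
          calc _ ≤ |2 * (T ℝ ((N:ℤ)+1)).coeff w| + |(T ℝ (N:ℤ)).coeff (w+1)| := abs_sub _ _
            _ = 2 * |(T ℝ ((N:ℤ)+1)).coeff w| + |(T ℝ (N:ℤ)).coeff (w+1)| := by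
                rw [abs_mul]; norm_num
        have hnat := auxPow2 N (w+1) (by omega)
        have hreal : 2*((w:ℝ)+1)*((N:ℝ)+1)^w + (N:ℝ)^(w+1) ≤ ((N:ℝ)+2)^(w+1) := by
          exact_mod_cast hnat
        have hfac : (Nat.factorial (w+1) : ℝ) = ((w:ℝ)+1) * Nat.factorial w := by
          rw [Nat.factorial_succ]; push_cast; ring
        have hfw : (0:ℝ) < Nat.factorial w := by positivity
        have hfw1 : (0:ℝ) < Nat.factorial (w+1) := by positivity
        push_cast
        calc |2 * (T ℝ ((N:ℤ)+1)).coeff w - (T ℝ (N:ℤ)).coeff (w+1)|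
            ≤ 2 * |(T ℝ ((N:ℤ)+1)).coeff w| + |(T ℝ (N:ℤ)).coeff (w+1)| := habs
          _ ≤ 2 * (((N:ℝ)+1)^w / Nat.factorial w) + (N:ℝ)^(w+1) / Nat.factorial (w+1) := by
              push_cast at b0 b1
              linarith
          _ = (2*((w:ℝ)+1)*((N:ℝ)+1)^w + (N:ℝ)^(w+1)) / Nat.factorial (w+1) := by
              rw [hfac]; field_simp
          _ ≤ ((N:ℝ)+2)^(w+1) / Nat.factorial (w+1) := by gcongr
          _ = ((N:ℝ)+1+1)^(w+1) / Nat.factorial (w+1) := by ring_nf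
  intro z
  exact (key N).1 z

lemma negprod (J : ℕ) (c : ℕ → ℝ) (h : ∀ i < J, c i < 0) :
    0 < (-1)^J * ∏ i ∈ Finset.range J, c i := by
  induction J with
  | zero => simp
  | succ J ih =>
    rw [Finset.prod_range_succ]
    have h1 : 0 < (-1)^J * ∏ i ∈ Finset.range J, c i := ih (fun i hi => h i (by omega))
    have h2 : c J < 0 := h J (by omega)
    have : (-1:ℝ)^(J+1) * ((∏ i ∈ Finset.range J, c i) * c J)
        = ((-1)^J * ∏ i ∈ Finset.range J, c i) * (-c J) := by ring
    rw [this]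
    exact mul_pos h1 (by linarith)

lemma prodXsubC_sign (t : Finset ℕ) (w : ℕ → ℝ) (hw : ∀ i ∈ t, 0 ≤ w i) (y : ℕ) :
    0 ≤ (-1)^(t.card + y) * (∏ i ∈ t, (X - Polynomial.C (w i))).coeff y := by
  classical
  induction t using Finset.induction_on generalizing y with
  | empty =>
    cases y with
    | zero => simp
    | succ n =>
      rw [Finset.prod_empty, Polynomial.coeff_one, if_neg (by omega : ¬ (n+1 = 0))]
      simp
  | @insert a t ha ih =>
    rw [Finset.prod_insert ha, Finset.card_insert_of_notMem ha]
    have hwa : 0 ≤ w a := hw a (Finset.mem_insert_self a t)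
    have hw' : ∀ i ∈ t, 0 ≤ w i := fun i hi => hw i (Finset.mem_insert_of_mem hi)
    rw [mul_comm (X - Polynomial.C (w a))]
    cases y with
    | zero =>
      rw [Polynomial.mul_coeff_zero]
      have : (X - Polynomial.C (w a)).coeff 0 = -(w a) := by simp
      rw [this]
      have h0 := ih hw' 0
      have expand : (-1:ℝ)^(t.card + 1 + 0) *
          ((∏ i ∈ t, (X - Polynomial.C (w i))).coeff 0 * -(w a))
          = w a * ((-1)^(t.card + 0) * (∏ i ∈ t, (X - Polynomial.C (w i))).coeff 0) := by
        rw [pow_add, pow_add]; ring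
      rw [expand]
      exact mul_nonneg hwa h0
    | succ y =>
      rw [Polynomial.coeff_mul_X_sub_C]
      have h1 := ih hw' y
      have h2 := ih hw' (y+1)
      have expand : (-1:ℝ)^(t.card + 1 + (y+1)) *
          ((∏ i ∈ t, (X - Polynomial.C (w i))).coeff y
            - (∏ i ∈ t, (X - Polynomial.C (w i))).coeff (y+1) * w a)
          = (-1)^(t.card + y) * (∏ i ∈ t, (X - Polynomial.C (w i))).coeff y
            + w a * ((-1)^(t.card + (y+1)) * (∏ i ∈ t, (X - Polynomial.C (w i))).coeff (y+1)) := by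
        rw [pow_add, pow_add, pow_add, pow_add]; ring
      rw [expand]
      exact add_nonneg h1 (mul_nonneg hwa h2)

noncomputable def epart (f : Polynomial ℝ) (σ m : ℕ) : Polynomial ℝ :=
  ∑ y' ∈ Finset.range (m+1), Polynomial.C (f.coeff (2*y'+σ)) * X^y'

lemma epart_coeff (f : Polynomial ℝ) (σ m y : ℕ) (hy : y ≤ m) :
    (epart f σ m).coeff y = f.coeff (2*y+σ) := by
  rw [epart, Polynomial.finset_sum_coeff]
  rw [Finset.sum_eq_single y]
  · rw [Polynomial.coeff_C_mul, Polynomial.coeff_X_pow, if_pos rfl, mul_one]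
  · intro b _ hb
    rw [Polynomial.coeff_C_mul, Polynomial.coeff_X_pow, if_neg (fun h => hb h.symm), mul_zero]
  · intro hy'
    exact absurd (Finset.mem_range.mpr (by omega)) hy'

lemma epart_degree (f : Polynomial ℝ) (σ m : ℕ) : (epart f σ m).degree < ((m+1 : ℕ) : WithBot ℕ) := by
  rw [epart]
  apply lt_of_le_of_lt (Polynomial.degree_sum_le _ _)
  rw [Finset.sup_lt_iff (by exact_mod_cast WithBot.bot_lt_coe (m+1))]
  intro b hb
  apply lt_of_le_of_lt (Polynomial.degree_C_mul_X_pow_le b _)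
  exact_mod_cast Nat.lt_of_lt_of_le (Finset.mem_range.mp hb) le_rfl

lemma epart_eval (f : Polynomial ℝ) (σ m n : ℕ) (hσ2 : σ < 2) (hnm : n = 2*m+σ)
    (hpar : ∀ z, z % 2 ≠ σ → f.coeff z = 0) (hdeg : ∀ z, n < z → f.coeff z = 0) (θ : ℝ) :
    θ^σ * (epart f σ m).eval (θ^2) = f.eval θ := by
  have hnd : f.natDegree < n + 1 := by
    have : f.natDegree ≤ n := Polynomial.natDegree_le_iff_coeff_eq_zero.mpr (fun N hN => hdeg N hN)
    omega
  rw [Polynomial.eval_eq_sum_range' hnd]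
  have himage : Finset.image (fun y' => 2*y'+σ) (Finset.range (m+1)) ⊆ Finset.range (n+1) := by
    intro z hz
    rw [Finset.mem_image] at hz
    obtain ⟨y', hy', rfl⟩ := hz
    rw [Finset.mem_range] at hy' ⊢
    omega
  have hvanish : ∀ z ∈ Finset.range (n+1),
      z ∉ Finset.image (fun y' => 2*y'+σ) (Finset.range (m+1)) → f.coeff z * θ^z = 0 := by
    intro z hz hznot
    by_cases hp : z % 2 = σ
    · exfalso
      apply hznot
      rw [Finset.mem_image]
      refine ⟨(z-σ)/2, Finset.mem_range.mpr ?_, ?_⟩ <;> rw [Finset.mem_range] at hz <;> omega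
    · rw [hpar z hp, zero_mul]
  rw [← Finset.sum_subset himage hvanish]
  rw [Finset.sum_image (by intro a _ b _ h; simp only at h; omega)]
  rw [epart, Polynomial.eval_finset_sum, Finset.mul_sum]
  apply Finset.sum_congr rfl
  intro y' _
  rw [Polynomial.eval_mul, Polynomial.eval_C, Polynomial.eval_pow, Polynomial.eval_X]
  rw [pow_add, pow_mul]
  ring

lemma coeff_comp_neg_X (f : Polynomial ℝ) (z : ℕ) :
    (f.comp (-X)).coeff z = (-1)^z * f.coeff z := by
  induction f using Polynomial.induction_on' with
  | add g h hg hh =>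
    rw [Polynomial.add_comp, Polynomial.coeff_add, hg, hh, Polynomial.coeff_add]
    ring
  | monomial i a =>
    rw [← Polynomial.C_mul_X_pow_eq_monomial]
    have hC : ((-1:ℝ[X]))^i = Polynomial.C ((-1:ℝ)^i) := by rw [map_pow, map_neg, map_one]
    have key : (Polynomial.C a * X^i).comp (-X) = Polynomial.C ((-1:ℝ)^i * a) * X^i := by
      rw [Polynomial.mul_comp, Polynomial.C_comp, Polynomial.pow_comp, Polynomial.X_comp,
        neg_pow, hC, map_mul]
      ring
    rw [key, Polynomial.coeff_C_mul, Polynomial.coeff_C_mul, Polynomial.coeff_X_pow]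
    by_cases hzi : z = i
    · subst hzi; rw [if_pos rfl]; ring
    · rw [if_neg hzi]; ring

set_option maxHeartbeats 2000000

/-- coefficient bound for polynomials bounded on `[-1, 1]`,
Timan Ch. 2.6 Eq. 9.  If `p` is a real polynomial of degree at most `k`, then
each coefficient satisfies `|c_x| ≤ (k^x / x!) max_{|θ| ≤ 1} |p(θ)|`. -/
theorem stmt_13 (k : ℕ) (p : Polynomial ℝ) (hp : p.natDegree ≤ k)
    (x : ℕ) (hx : x ≤ k) :
    |p.coeff x| ≤ (k : ℝ) ^ x / (Nat.factorial x) *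
      sSup ((fun θ => |p.eval θ|) '' Set.Icc (-1 : ℝ) 1) := by
  set M := sSup ((fun θ => |p.eval θ|) '' Set.Icc (-1 : ℝ) 1) with hMdef
  have hcont : Continuous fun θ : ℝ => |p.eval θ| := (p.continuous_aeval).abs
  have hbdd : BddAbove ((fun θ => |p.eval θ|) '' Set.Icc (-1 : ℝ) 1) :=
    (isCompact_Icc.image hcont).bddAbove
  have hM : ∀ θ ∈ Set.Icc (-1:ℝ) 1, |p.eval θ| ≤ M :=
    fun θ hθ => le_csSup hbdd (Set.mem_image_of_mem _ hθ)
  have hM0 : (0:ℝ) ≤ M := le_trans (abs_nonneg _) (hM 0 (by norm_num))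
  by_cases hx0 : x = 0
  · subst hx0
    rw [Polynomial.coeff_zero_eq_eval_zero]
    calc |p.eval 0| ≤ M := hM 0 (by norm_num)
      _ = (k:ℝ)^0 / (Nat.factorial 0) * M := by norm_num
  -- main case
  have hx1 : 1 ≤ x := by omega
  set σ := x % 2 with hσdef
  set n := if k % 2 = x % 2 then k else k - 1 with hndef
  have hσ2 : σ < 2 := Nat.mod_lt _ (by norm_num)
  have hkx : 1 ≤ k := le_trans hx1 hx
  have hnk : n ≤ k := by rw [hndef]; split <;> omega
  have hpar_n : n % 2 = x % 2 := by
    rw [hndef]; split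
    · assumption
    · omega
  have hnx : x ≤ n := by
    rw [hndef]; split
    · exact hx
    · rename_i h
      rcases Nat.lt_or_ge x k with h' | h'
      · omega
      · exfalso; apply h; omega
  set m := (n - σ)/2 with hmdef
  set y := (x - σ)/2 with hydef
  have hm : n = 2*m + σ := by omega
  have hyx : x = 2*y + σ := by omega
  have hym : y ≤ m := by omega
  have hn1 : 1 ≤ n := by omega
  set P : Polynomial ℝ := Polynomial.C (1/2 : ℝ) * (p + Polynomial.C ((-1:ℝ)^x) * p.comp (-X))
    with hPdef
  have hPc : ∀ z, P.coeff z = (1/2) * (1 + (-1:ℝ)^x * (-1)^z) * p.coeff z := by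
    intro z
    rw [hPdef, Polynomial.coeff_C_mul, Polynomial.coeff_add, Polynomial.coeff_C_mul,
      coeff_comp_neg_X]
    ring
  have hPcx : P.coeff x = p.coeff x := by
    rw [hPc]
    have : (-1:ℝ)^x * (-1)^x = 1 := by
      rw [← pow_add]
      exact Even.neg_one_pow ⟨x, by ring⟩
    rw [this]
    norm_num
  have hPpar : ∀ z, z % 2 ≠ σ → P.coeff z = 0 := by
    intro z hz
    rw [hPc]
    have : (-1:ℝ)^x * (-1)^z = -1 := by
      rw [← pow_add]
      refine Odd.neg_one_pow ?_
      rw [Nat.odd_iff]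
      omega
    rw [this]
    norm_num
  have hPdegz : ∀ z, n < z → P.coeff z = 0 := by
    intro z hz
    by_cases hzp : z % 2 = σ
    · have hzk : k < z := by
        rw [hndef] at hz
        by_cases hkp : k % 2 = x % 2
        · rw [if_pos hkp] at hz; exact hz
        · rw [if_neg hkp] at hz; omega
      rw [hPc, Polynomial.coeff_eq_zero_of_natDegree_lt (lt_of_le_of_lt hp hzk), mul_zero]
    · exact hPpar z hzp
  have hPeval : ∀ θ : ℝ, P.eval θ = (1/2) * (p.eval θ + (-1:ℝ)^x * p.eval (-θ)) := by
    intro θ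
    rw [hPdef]
    simp [Polynomial.eval_comp]
  have hPb : ∀ θ ∈ Set.Icc (-1:ℝ) 1, |P.eval θ| ≤ M := by
    intro θ hθ
    rw [hPeval]
    have hθ' : -θ ∈ Set.Icc (-1:ℝ) 1 := by
      simp only [Set.mem_Icc] at hθ ⊢
      constructor <;> linarith [hθ.1, hθ.2]
    have h1 := hM θ hθ
    have h2 := hM (-θ) hθ'
    have habsx : |(-1:ℝ)^x| = 1 := by rw [abs_pow, abs_neg, abs_one, one_pow]
    calc |1/2 * (p.eval θ + (-1:ℝ)^x * p.eval (-θ))|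
        = 1/2 * |p.eval θ + (-1:ℝ)^x * p.eval (-θ)| := by rw [abs_mul]; norm_num
      _ ≤ 1/2 * (|p.eval θ| + |(-1:ℝ)^x * p.eval (-θ)|) := by
          have := abs_add_le (p.eval θ) ((-1:ℝ)^x * p.eval (-θ))
          linarith
      _ = 1/2 * (|p.eval θ| + |p.eval (-θ)|) := by rw [abs_mul, habsx, one_mul]
      _ ≤ M := by linarith
  -- nodes
  set η : ℕ → ℝ := fun j => Real.cos (j * Real.pi / n) with hηdef
  set u : ℕ → ℝ := fun j => (η j)^2 with hudef
  set e : ℕ → ℝ := fun j => (η j)^σ with hedef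
  have hπ := Real.pi_pos
  have hn0 : (0:ℝ) < n := by exact_mod_cast hn1
  have hangle : ∀ j : ℕ, j ≤ m → (j:ℝ) * Real.pi / n ∈ Set.Icc 0 (Real.pi/2) := by
    intro j hj
    constructor
    · positivity
    · rw [div_le_div_iff₀ hn0 (by norm_num : (0:ℝ) < 2)]
      have h2j : (2*j : ℝ) ≤ n := by
        have : 2*j ≤ n := by omega
        exact_mod_cast this
      nlinarith
  have hη0 : ∀ j : ℕ, j ≤ m → 0 ≤ η j := by
    intro j hj
    apply Real.cos_nonneg_of_mem_Icc
    have := hangle j hj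
    constructor
    · linarith [this.1, hπ]
    · exact this.2
  have hη1 : ∀ j : ℕ, η j ≤ 1 := fun j => Real.cos_le_one _
  have hmono : ∀ i j : ℕ, i < j → j ≤ m → u j < u i := by
    intro i j hij hj
    have hai := hangle i (by omega)
    have haj := hangle j hj
    have hcos : η j < η i := by
      apply Real.strictAntiOn_cos
      · exact ⟨hai.1, le_trans hai.2 (by linarith)⟩
      · exact ⟨haj.1, le_trans haj.2 (by linarith)⟩
      · apply div_lt_div_of_pos_right ?_ hn0
        have : (i:ℝ) < j := by exact_mod_cast hij
        nlinarith
    have h0j : 0 ≤ η j := hη0 j hj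
    rw [hudef]
    simp only
    nlinarith
  have hepos : ∀ j : ℕ, j ≤ m → 0 < e j := by
    intro j hj
    rw [hedef]
    simp only
    rcases Nat.lt_or_ge σ 1 with hσ0 | hσ1
    · have : σ = 0 := by omega
      rw [this, pow_zero]; norm_num
    · have hσ1' : σ = 1 := by omega
      have hjn : 2*j < n := by omega
      have hηpos : 0 < η j := by
        apply Real.cos_pos_of_mem_Ioo
        constructor
        · have := (hangle j hj).1; linarith
        · rw [div_lt_div_iff₀ hn0 (by norm_num : (0:ℝ) < 2)]
          have h2j : (2*j : ℝ) < n := by exact_mod_cast hjn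
          nlinarith
      positivity
  set s : Finset ℕ := Finset.range (m+1) with hsdef
  have hinj : Set.InjOn u ↑s := by
    intro a ha b hb hab
    simp only [hsdef, Finset.coe_range, Set.mem_Iio] at ha hb
    by_contra hne
    rcases Nat.lt_or_ge a b with h | h
    · exact absurd hab (ne_of_gt (hmono a b h (by omega)))
    · have h' : b < a := by omega
      exact absurd hab (ne_of_lt (hmono b a h' (by omega)))
  have hcards : s.card = m + 1 := Finset.card_range _
  -- interpolation coefficient identity
  have coeff_eq : ∀ f : Polynomial ℝ, f.degree < ((m+1:ℕ) : WithBot ℕ) →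
      f.coeff y = ∑ j ∈ s, f.eval (u j) * (Lagrange.basis s u j).coeff y := by
    intro f hdeg
    have hdeg' : f.degree < (s.card : WithBot ℕ) := by rw [hcards]; exact hdeg
    have hfi := Lagrange.eq_interpolate hinj hdeg'
    conv_lhs => rw [hfi]
    rw [Lagrange.interpolate_apply, Polynomial.finset_sum_coeff]
    apply Finset.sum_congr rfl
    intro j _
    rw [Polynomial.coeff_C_mul]
  -- basis decomposition
  have basis_eq : ∀ j, Lagrange.basis s u j
      = Polynomial.C (∏ i ∈ s.erase j, (u j - u i)⁻¹) * ∏ i ∈ s.erase j, (X - Polynomial.C (u i)) := by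
    intro j
    rw [Lagrange.basis]
    rw [map_prod]
    rw [← Finset.prod_mul_distrib]
    apply Finset.prod_congr rfl
    intro i _
    rw [Lagrange.basisDivisor]
  -- sign of denominators
  have hDsign : ∀ j ∈ s, 0 ≤ (-1:ℝ)^j * ∏ i ∈ s.erase j, (u j - u i)⁻¹ := by
    intro j hj
    have hjm : j ≤ m := by
      rw [hsdef] at hj
      have := Finset.mem_range.mp hj
      omega
    have hsplit : s.erase j = Finset.range j ∪ Finset.Ico (j+1) (m+1) := by
      ext i
      simp only [Finset.mem_erase, Finset.mem_range, Finset.mem_union, Finset.mem_Ico, hsdef]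
      omega
    have hdisj : Disjoint (Finset.range j) (Finset.Ico (j+1) (m+1)) := by
      rw [Finset.disjoint_left]
      intro i hi hi'
      rw [Finset.mem_range] at hi
      rw [Finset.mem_Ico] at hi'
      omega
    rw [hsplit, Finset.prod_union hdisj]
    have h1 : 0 < (-1:ℝ)^j * ∏ i ∈ Finset.range j, (u j - u i)⁻¹ := by
      apply negprod
      intro i hi
      have : u j < u i := hmono i j hi hjm
      have hne : u j - u i < 0 := by linarith
      exact inv_lt_zero.mpr hne
    have h2 : 0 < ∏ i ∈ Finset.Ico (j+1) (m+1), (u j - u i)⁻¹ := by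
      apply Finset.prod_pos
      intro i hi
      rw [Finset.mem_Ico] at hi
      have : u i < u j := hmono j i (by omega) (by omega)
      have : 0 < u j - u i := by linarith
      positivity
    calc (0:ℝ) ≤ ((-1:ℝ)^j * ∏ i ∈ Finset.range j, (u j - u i)⁻¹)
          * ∏ i ∈ Finset.Ico (j+1) (m+1), (u j - u i)⁻¹ := le_of_lt (mul_pos h1 h2)
      _ = (-1:ℝ)^j * ((∏ i ∈ Finset.range j, (u j - u i)⁻¹)
          * ∏ i ∈ Finset.Ico (j+1) (m+1), (u j - u i)⁻¹) := by ring
  -- sign of numerator coefficients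
  have hNsign : ∀ j ∈ s, 0 ≤ (-1:ℝ)^(m+y) * (∏ i ∈ s.erase j, (X - Polynomial.C (u i))).coeff y := by
    intro j hj
    have hcard : (s.erase j).card = m := by
      rw [Finset.card_erase_of_mem hj, hcards]
      omega
    have := prodXsubC_sign (s.erase j) u (fun i _ => sq_nonneg (η i)) y
    rw [hcard] at this
    exact this
  -- combined sign fact
  have hsign : ∀ j ∈ s, |(Lagrange.basis s u j).coeff y|
      = (-1:ℝ)^(m+y+j) * (Lagrange.basis s u j).coeff y := by
    intro j hj
    have hpos : 0 ≤ (-1:ℝ)^(m+y+j) * (Lagrange.basis s u j).coeff y := by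
      rw [basis_eq j, Polynomial.coeff_C_mul]
      have expand : (-1:ℝ)^(m+y+j) * ((∏ i ∈ s.erase j, (u j - u i)⁻¹)
            * (∏ i ∈ s.erase j, (X - Polynomial.C (u i))).coeff y)
          = ((-1:ℝ)^j * ∏ i ∈ s.erase j, (u j - u i)⁻¹)
            * ((-1:ℝ)^(m+y) * (∏ i ∈ s.erase j, (X - Polynomial.C (u i))).coeff y) := by
        rw [pow_add]
        ring
      rw [expand]
      exact mul_nonneg (hDsign j hj) (hNsign j hj)
    have habs : |(-1:ℝ)^(m+y+j) * (Lagrange.basis s u j).coeff y|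
        = |(Lagrange.basis s u j).coeff y| := by
      rw [abs_mul, abs_pow, abs_neg, abs_one, one_pow, one_mul]
    rw [← habs, abs_of_nonneg hpos]
  -- the reduced polynomials
  set Q : Polynomial ℝ := epart P σ m with hQdef
  set G : Polynomial ℝ := epart (Polynomial.Chebyshev.T ℝ (n:ℤ)) σ m with hGdef
  have hQev : ∀ θ : ℝ, θ^σ * Q.eval (θ^2) = P.eval θ := by
    intro θ
    exact epart_eval P σ m n hσ2 hm hPpar hPdegz θ
  have hTpar : ∀ z, z % 2 ≠ σ → (Polynomial.Chebyshev.T ℝ (n:ℤ)).coeff z = 0 := by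
    intro z hz
    exact cheb_vanish n z (Or.inr (by omega))
  have hTdeg : ∀ z, n < z → (Polynomial.Chebyshev.T ℝ (n:ℤ)).coeff z = 0 := by
    intro z hz
    exact cheb_vanish n z (Or.inl hz)
  have hGev : ∀ θ : ℝ, θ^σ * G.eval (θ^2) = (Polynomial.Chebyshev.T ℝ (n:ℤ)).eval θ := by
    intro θ
    exact epart_eval _ σ m n hσ2 hm hTpar hTdeg θ
  -- Chebyshev at nodes
  have hTnode : ∀ j : ℕ, (Polynomial.Chebyshev.T ℝ (n:ℤ)).eval (η j) = (-1:ℝ)^j := by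
    intro j
    rw [hηdef]
    simp only
    rw [Polynomial.Chebyshev.T_real_cos]
    have harg : ((n:ℤ) : ℝ) * ((j:ℝ) * Real.pi / (n:ℝ)) = (j:ℝ) * Real.pi := by
      push_cast
      field_simp
    rw [harg]
    have := Real.cos_nat_mul_pi_sub 0 j
    simpa using this
  have hGnode : ∀ j : ℕ, e j * G.eval (u j) = (-1:ℝ)^j := by
    intro j
    have := hGev (η j)
    rw [hTnode j] at this
    exact this
  have hQnode : ∀ j : ℕ, e j * Q.eval (u j) = P.eval (η j) := fun j => hQev (η j)
  have hQb : ∀ j : ℕ, j ≤ m → |Q.eval (u j)| ≤ M / e j := by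
    intro j hj
    have hej := hepos j hj
    rw [le_div_iff₀ hej]
    have hmem : η j ∈ Set.Icc (-1:ℝ) 1 := ⟨by linarith [hη0 j hj], hη1 j⟩
    calc |Q.eval (u j)| * e j = |e j * Q.eval (u j)| := by
          rw [abs_mul, abs_of_pos hej]; ring
      _ = |P.eval (η j)| := by rw [hQnode j]
      _ ≤ M := hPb (η j) hmem
  have hQdeg2 : Q.degree < ((m+1:ℕ) : WithBot ℕ) := epart_degree _ _ _
  have hGdeg2 : G.degree < ((m+1:ℕ) : WithBot ℕ) := epart_degree _ _ _
  have hQy : Q.coeff y = p.coeff x := by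
    rw [hQdef, epart_coeff P σ m y hym, ← hyx, hPcx]
  have hGy : G.coeff y = (Polynomial.Chebyshev.T ℝ (n:ℤ)).coeff x := by
    rw [hGdef, epart_coeff _ σ m y hym, ← hyx]
  have hGu : ∀ j : ℕ, j ≤ m → G.eval (u j) = (-1:ℝ)^j / e j := by
    intro j hj
    have hej := hepos j hj
    rw [eq_div_iff (ne_of_gt hej)]
    rw [mul_comm]
    exact hGnode j
  have termid : ∀ j ∈ s, (M / e j) * |(Lagrange.basis s u j).coeff y|
      = M * ((-1:ℝ)^(m+y) * (G.eval (u j) * (Lagrange.basis s u j).coeff y)) := by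
    intro j hj
    have hjm : j ≤ m := by
      rw [hsdef] at hj; have := Finset.mem_range.mp hj; omega
    have hej := hepos j hjm
    rw [hsign j hj, hGu j hjm, pow_add]
    ring
  calc |p.coeff x| = |Q.coeff y| := by rw [hQy]
    _ = |∑ j ∈ s, Q.eval (u j) * (Lagrange.basis s u j).coeff y| := by
        rw [← coeff_eq Q hQdeg2]
    _ ≤ ∑ j ∈ s, |Q.eval (u j) * (Lagrange.basis s u j).coeff y| :=
        Finset.abs_sum_le_sum_abs _ _
    _ = ∑ j ∈ s, |Q.eval (u j)| * |(Lagrange.basis s u j).coeff y| := by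
        apply Finset.sum_congr rfl
        intro j _
        rw [abs_mul]
    _ ≤ ∑ j ∈ s, (M / e j) * |(Lagrange.basis s u j).coeff y| := by
        apply Finset.sum_le_sum
        intro j hj
        have hjm : j ≤ m := by
          rw [hsdef] at hj; have := Finset.mem_range.mp hj; omega
        exact mul_le_mul_of_nonneg_right (hQb j hjm) (abs_nonneg _)
    _ = ∑ j ∈ s, (M * (-1:ℝ)^(m+y)) * (G.eval (u j) * (Lagrange.basis s u j).coeff y) := by
        apply Finset.sum_congr rfl
        intro j hj
        rw [termid j hj]
        ring
    _ = (M * (-1:ℝ)^(m+y)) * ∑ j ∈ s, G.eval (u j) * (Lagrange.basis s u j).coeff y := by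
        rw [← Finset.mul_sum]
    _ = (M * (-1:ℝ)^(m+y)) * G.coeff y := by rw [← coeff_eq G hGdeg2]
    _ = M * ((-1:ℝ)^(m+y) * G.coeff y) := by ring
    _ ≤ M * |G.coeff y| := by
        apply mul_le_mul_of_nonneg_left ?_ hM0
        calc (-1:ℝ)^(m+y) * G.coeff y ≤ |(-1:ℝ)^(m+y) * G.coeff y| := le_abs_self _
          _ = |G.coeff y| := by rw [abs_mul, abs_pow, abs_neg, abs_one, one_pow, one_mul]
    _ = M * |(Polynomial.Chebyshev.T ℝ (n:ℤ)).coeff x| := by rw [hGy]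
    _ ≤ M * ((n:ℝ)^x / (Nat.factorial x)) :=
        mul_le_mul_of_nonneg_left (cheb_bound n x) hM0
    _ ≤ M * ((k:ℝ)^x / (Nat.factorial x)) := by
        have hnk' : (n:ℝ) ≤ (k:ℝ) := by exact_mod_cast hnk
        apply mul_le_mul_of_nonneg_left ?_ hM0
        gcongr
    _ = (k:ℝ)^x / (Nat.factorial x) * M := by ring
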